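/- Let G be a finite connected graph and W a double trace of G. Then W is a strong trace if and only if for every vertex v of G the vertex figure of v with respect to W is connected; here the vertex figure is the multigraph on the set E(v) of edges incident with v in which two (occurrences of) edges e, e' ∈ E(v) are joined whenever e and e' occur consecutively at some visit of W to v. Equivalently: W is strong if and only if for every vertex v, the equivalence relation on E(v) generated by the relation 'e and e' are consecutive at some visit of W to v' has exactly one equivalence class. -/
import Mathlib


namespace StrongTraces

open SimpleGraph Finset

/-- Cyclic successor on `Fin n`. -/
def csucc {n : ℕ} (i : Fin n) : Fin n :=
  ⟨(i.val + 1) % n, Nat.mod_lt _ (by have := i.isLt; omega)⟩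

/-- Cyclic predecessor on `Fin n`. -/
def cpred {n : ℕ} (i : Fin n) : Fin n :=
  ⟨(i.val + n - 1) % n, Nat.mod_lt _ (by have := i.isLt; omega)⟩

variable {V : Type*} [Fintype V] [DecidableEq V]

/-- A double trace of `G`: a closed walk, encoded as a cyclic sequence of `n` vertices
(read cyclically, so step `i` goes from `f i` to `f (csucc i)`), that traverses every
edge of `G` exactly twice.  (`n = 0` encodes the trivial closed walk.) -/
structure DoubleTrace (G : SimpleGraph V) where
  n : ℕ
  f : Fin n → V
  adj : ∀ i : Fin n, G.Adj (f i) (f (csucc i))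
  twice : ∀ e ∈ G.edgeSet,
    (Finset.univ.filter fun i : Fin n => s(f i, f (csucc i)) = e).card = 2

variable {G : SimpleGraph V}

/-- `W` has an `N`-repetition at `v`: at every visit of `W` to `v`, the predecessor
lies in `N` if and only if the successor lies in `N`. -/
def DoubleTrace.HasRepetition (W : DoubleTrace G) (v : V) (N : Set V) : Prop :=
  ∀ i : Fin W.n, W.f i = v → (W.f (cpred i) ∈ N ↔ W.f (csucc i) ∈ N)

/-- A strong trace: a double trace all of whose repetitions are trivial
(`N = ∅` or `N = N(v)`). -/
def DoubleTrace.IsStrong (W : DoubleTrace G) : Prop :=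
  ∀ (v : V) (N : Set V), N ⊆ G.neighborSet v → W.HasRepetition v N →
    N = ∅ ∨ N = G.neighborSet v

/-- A `d`-stable trace: a double trace with no `N`-repetition with `1 ≤ |N| ≤ d`
at any vertex. -/
def DoubleTrace.IsStable (W : DoubleTrace G) (d : ℕ) : Prop :=
  ∀ (v : V) (N : Set V), N ⊆ G.neighborSet v → 1 ≤ N.ncard → N.ncard ≤ d →
    ¬ W.HasRepetition v N

/-- The number of times `W` makes the directed step from `u` to `v`. -/
def DoubleTrace.traversalCount (W : DoubleTrace G) (u v : V) : ℕ :=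
  (Finset.univ.filter fun i : Fin W.n => W.f i = u ∧ W.f (csucc i) = v).card

/-- `W` traverses every edge once in each direction. -/
def DoubleTrace.IsAntiparallel (W : DoubleTrace G) : Prop :=
  ∀ u v : V, G.Adj u v → W.traversalCount u v = 1

/-- `W` traverses every edge twice in the same direction. -/
def DoubleTrace.IsParallel (W : DoubleTrace G) : Prop :=
  ∀ u v : V, G.Adj u v → W.traversalCount u v = 0 ∨ W.traversalCount u v = 2

/-- The adjacency relation of the vertex figure of `v` with respect to `W`:
two edges incident with `v` are related if they occur consecutively at some visit
of `W` to `v`. -/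
def DoubleTrace.VertexFigureRel (W : DoubleTrace G) (v : V) :
    G.incidenceSet v → G.incidenceSet v → Prop :=
  fun e e' => ∃ i : Fin W.n, W.f i = v ∧
    ((e.1 = s(W.f (cpred i), v) ∧ e'.1 = s(v, W.f (csucc i))) ∨
     (e'.1 = s(W.f (cpred i), v) ∧ e.1 = s(v, W.f (csucc i))))

/-- The vertex figure of `v` with respect to `W` is connected: the equivalence
relation generated by consecutiveness at visits to `v` relates any two edges
incident with `v`. -/
def DoubleTrace.VertexFigureConnected (W : DoubleTrace G) (v : V) : Prop :=
  ∀ e e' : G.incidenceSet v, Relation.EqvGen (W.VertexFigureRel v) e e'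

/-- The number of connected components of the vertex figure of `v` with respect to
`W`, i.e. the number of equivalence classes of the equivalence relation generated by
consecutiveness at visits to `v`. -/
noncomputable def DoubleTrace.vertexFigureComponents (W : DoubleTrace G) (v : V) : ℕ :=
  Nat.card (Quot (W.VertexFigureRel v))

/-- The number of edges of `H` lying in the connected component `c` of `H`. -/
noncomputable def componentEdgeCount (H : SimpleGraph V) (c : H.ConnectedComponent) : ℕ :=
  Nat.card {e : Sym2 V | e ∈ H.edgeSet ∧ ∀ x ∈ e, H.connectedComponentMk x = c}

private lemma csucc_cpred {n : ℕ} (i : Fin n) : csucc (cpred i) = i := by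
  apply Fin.ext
  show ((i.val + n - 1) % n + 1) % n = i.val
  rcases Nat.eq_zero_or_pos i.val with h | h
  · have hn : 0 < n := i.pos
    rw [h]
    have h0 : 0 + n - 1 = n - 1 := by omega
    rw [h0]
    have h1 : (n - 1) % n = n - 1 := Nat.mod_eq_of_lt (by omega)
    rw [h1]
    have h2 : n - 1 + 1 = n := by omega
    rw [h2, Nat.mod_self]
  · have h1 : i.val + n - 1 = (i.val - 1) + n := by omega
    rw [h1, Nat.add_mod_right]
    have h2 : (i.val - 1) % n = i.val - 1 := Nat.mod_eq_of_lt (by omega)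
    rw [h2]
    have h3 : i.val - 1 + 1 = i.val := by omega
    rw [h3, Nat.mod_eq_of_lt i.isLt]

private lemma eqvGen_iff {α : Type*} {r : α → α → Prop} {P : α → Prop}
    (h : ∀ a b, r a b → (P a ↔ P b)) {a b : α} (hab : Relation.EqvGen r a b) :
    P a ↔ P b := by
  induction hab with
  | rel a b hr => exact h a b hr
  | refl => exact Iff.rfl
  | symm _ _ _ ih => exact ih.symm
  | trans _ _ _ _ _ ih1 ih2 => exact ih1.trans ih2

private lemma adj_pred {W : DoubleTrace G} {v : V} {i : Fin W.n} (hi : W.f i = v) :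
    G.Adj (W.f (cpred i)) v := by
  have := W.adj (cpred i)
  rwa [csucc_cpred, hi] at this

private lemma adj_succ {W : DoubleTrace G} {v : V} {i : Fin W.n} (hi : W.f i = v) :
    G.Adj v (W.f (csucc i)) := by
  have := W.adj i
  rwa [hi] at this

/-- A double trace of a finite connected graph is strong if and only
if all of its vertex figures are connected. -/
theorem isStrong_iff_vertexFigures_connected {V : Type*} [Fintype V] [DecidableEq V]
    {G : SimpleGraph V} (hconn : G.Connected) (W : DoubleTrace G) :
    W.IsStrong ↔ ∀ v : V, W.VertexFigureConnected v := by
  constructor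
  · intro hS v e e'
    set r := W.VertexFigureRel v with hr
    set N : Set V :=
      {u | ∃ h : s(u, v) ∈ G.incidenceSet v, Relation.EqvGen r ⟨s(u, v), h⟩ e} with hN
    have hNsub : N ⊆ G.neighborSet v := by
      rintro u ⟨h, -⟩
      exact (G.mk'_mem_incidenceSet_iff.1 h).1.symm
    have hrep : W.HasRepetition v N := by
      intro i hi
      have hp : G.Adj (W.f (cpred i)) v := adj_pred hi
      have hs : G.Adj v (W.f (csucc i)) := adj_succ hi
      have hpe : s(W.f (cpred i), v) ∈ G.incidenceSet v :=
        G.mk'_mem_incidenceSet_right_iff.2 hp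
      have hse : s(W.f (csucc i), v) ∈ G.incidenceSet v :=
        G.mk'_mem_incidenceSet_right_iff.2 hs.symm
      have hrel : r ⟨s(W.f (cpred i), v), hpe⟩ ⟨s(W.f (csucc i), v), hse⟩ :=
        ⟨i, hi, Or.inl ⟨rfl, Sym2.eq_swap⟩⟩
      constructor
      · rintro ⟨h, he⟩
        exact ⟨hse, Relation.EqvGen.trans _ _ _
          (Relation.EqvGen.symm _ _ (Relation.EqvGen.rel _ _ hrel)) he⟩
      · rintro ⟨h, he⟩
        exact ⟨hpe, Relation.EqvGen.trans _ _ _ (Relation.EqvGen.rel _ _ hrel) he⟩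
    have hvmem : v ∈ e.1 := e.2.2
    set w := Sym2.Mem.other hvmem with hw
    have hwe : s(w, v) = e.1 := by rw [Sym2.eq_swap]; exact Sym2.other_spec hvmem
    have hwm : s(w, v) ∈ G.incidenceSet v := by rw [hwe]; exact e.2
    have hwN : w ∈ N := by
      refine ⟨hwm, ?_⟩
      have : (⟨s(w, v), hwm⟩ : G.incidenceSet v) = e := Subtype.ext hwe
      rw [this]
      exact Relation.EqvGen.refl e
    have hNeq : N = G.neighborSet v := by
      rcases hS v N hNsub hrep with h | h
      · exact absurd (h ▸ hwN) (Set.notMem_empty w)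
      · exact h
    have hvmem' : v ∈ e'.1 := e'.2.2
    set w' := Sym2.Mem.other hvmem' with hw'
    have hwe' : s(w', v) = e'.1 := by rw [Sym2.eq_swap]; exact Sym2.other_spec hvmem'
    have hwm' : s(w', v) ∈ G.incidenceSet v := by rw [hwe']; exact e'.2
    have hw'N : w' ∈ N := by
      rw [hNeq]
      exact (G.mk'_mem_incidenceSet_iff.1 hwm').1.symm
    obtain ⟨h', hgen⟩ := hw'N
    have : (⟨s(w', v), h'⟩ : G.incidenceSet v) = e' := Subtype.ext hwe'
    rw [this] at hgen
    exact Relation.EqvGen.symm _ _ hgen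
  · intro hC v N hNsub hrep
    by_contra hcon
    push_neg at hcon
    obtain ⟨hne, hNne⟩ := hcon
    obtain ⟨u, hu⟩ := hne
    have hns : ¬ G.neighborSet v ⊆ N := fun h => hNne (Set.Subset.antisymm hNsub h)
    obtain ⟨u', hu'v, hu'N⟩ := Set.not_subset.1 hns
    have haux : ∀ z : V, (∃ a ∈ N, s(z, v) = s(a, v)) ↔ z ∈ N := by
      intro z
      constructor
      · rintro ⟨a, ha, heq⟩
        rwa [Sym2.congr_left.1 heq]
      · intro hz
        exact ⟨z, hz, rfl⟩
    set P : G.incidenceSet v → Prop := fun e => ∃ a ∈ N, e.1 = s(a, v) with hP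
    have hinv : ∀ a b, W.VertexFigureRel v a b → (P a ↔ P b) := by
      rintro a b ⟨i, hi, hcase⟩
      have key := hrep i hi
      rcases hcase with ⟨ha, hb⟩ | ⟨hb, ha⟩ <;>
      · simp only [hP, ha, hb, Sym2.eq_swap (a := v)]
        rw [haux, haux]
        first
          | exact key
          | exact key.symm
    have he : s(u, v) ∈ G.incidenceSet v :=
      G.mk'_mem_incidenceSet_right_iff.2 (hNsub hu).symm
    have he' : s(u', v) ∈ G.incidenceSet v :=
      G.mk'_mem_incidenceSet_right_iff.2 hu'v.symm
    have hgen := hC v ⟨s(u, v), he⟩ ⟨s(u', v), he'⟩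
    have hiff := eqvGen_iff hinv hgen
    have hPu : P ⟨s(u, v), he⟩ := ⟨u, hu, rfl⟩
    have hPu' := hiff.1 hPu
    exact hu'N ((haux u').1 hPu')

end StrongTraces
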